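/- The optimal solution of the problem max { ⟨L, W⟩ - (μ/2)||W||_F² : W ∈ ℝ^{m×n}, ||W|| ≤ 1 } (spectral norm constraint) is W_μ(L) = U Diag(min{σ̄/μ, 1}) Vᵀ, where L = U Diag(σ̄) Vᵀ is a singular value decomposition of L and the min is taken componentwise. -/

import Mathlib

open Matrix BigOperators Finset

variable {m n : ℕ}

/-- Euclidean norm of a vector. -/
noncomputable def e2 {k : ℕ} (v : Fin k → ℝ) : ℝ := Real.sqrt (∑ i, v i ^ 2)

/-- Spectral norm (largest singular value) of a matrix, as the operator norm ℓ2 → ℓ2. -/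
noncomputable def specNorm (A : Matrix (Fin m) (Fin n) ℝ) : ℝ :=
  sSup {c | ∃ x : Fin n → ℝ, e2 x ≤ 1 ∧ c = e2 (A.mulVec x)}

/-- Frobenius (trace) inner product. -/
noncomputable def frobInner (A B : Matrix (Fin m) (Fin n) ℝ) : ℝ := ∑ i, ∑ j, A i j * B i j

/-- Nuclear norm, via duality with the spectral norm. -/
noncomputable def nucNorm (A : Matrix (Fin m) (Fin n) ℝ) : ℝ :=
  sSup {c | ∃ W : Matrix (Fin m) (Fin n) ℝ, specNorm W ≤ 1 ∧ c = frobInner A W}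

/-- Frobenius norm. -/
noncomputable def frobNorm (A : Matrix (Fin m) (Fin n) ℝ) : ℝ :=
  Real.sqrt (∑ i, ∑ j, A i j ^ 2)

/-- Squared Frobenius norm. -/
noncomputable def frobSq (A : Matrix (Fin m) (Fin n) ℝ) : ℝ := ∑ i, ∑ j, A i j ^ 2

/-- Entrywise ℓ1 norm. -/
noncomputable def l1Norm (A : Matrix (Fin m) (Fin n) ℝ) : ℝ := ∑ i, ∑ j, |A i j|

/-- Projection onto the index set Ω (zeroing out entries off Ω). -/
def piom (Ω : Finset (Fin m × Fin n)) (A : Matrix (Fin m) (Fin n) ℝ) :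
    Matrix (Fin m) (Fin n) ℝ :=
  Matrix.of fun i j => if (i, j) ∈ Ω then A i j else 0

/-- the optimal solution of
`max { ⟨L, W⟩ - (μ/2)‖W‖_F² : ‖W‖ ≤ 1 }` (spectral norm constraint) is
`W_μ(L) = U Diag(min{σ̄/μ, 1}) Vᵀ`, where `L = U Diag(σ̄) Vᵀ` is an SVD of `L`. -/
lemma e2_le_one_iff {k : ℕ} (v : Fin k → ℝ) : e2 v ≤ 1 ↔ ∑ i, v i ^ 2 ≤ 1 := by
  unfold e2; exact Real.sqrt_le_one

lemma specNorm_le {p q : ℕ} (A : Matrix (Fin p) (Fin q) ℝ) (c : ℝ) (hc : 0 ≤ c)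
    (h : ∀ x : Fin q → ℝ, e2 x ≤ 1 → e2 (A.mulVec x) ≤ c) : specNorm A ≤ c := by
  apply Real.sSup_le _ hc
  rintro _ ⟨x, hx, rfl⟩
  exact h x hx

lemma e2_mulVec_le {p q : ℕ} (A : Matrix (Fin p) (Fin q) ℝ) (x : Fin q → ℝ) (hx : e2 x ≤ 1) :
    e2 (A.mulVec x) ≤ Real.sqrt (∑ i, ∑ j, A i j ^ 2) := by
  unfold e2
  apply Real.sqrt_le_sqrt
  have hx' : ∑ j, x j ^ 2 ≤ 1 := (e2_le_one_iff x).1 hx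
  have : ∀ i, (A.mulVec x i) ^ 2 ≤ ∑ j, A i j ^ 2 := by
    intro i
    have cs := Finset.sum_mul_sq_le_sq_mul_sq Finset.univ (fun j => A i j) x
    have h0 : (0:ℝ) ≤ ∑ j, A i j ^ 2 := Finset.sum_nonneg fun j _ => sq_nonneg _
    have : (A.mulVec x i) ^ 2 ≤ (∑ j, A i j ^ 2) * (∑ j, x j ^ 2) := by
      simpa [Matrix.mulVec, dotProduct] using cs
    nlinarith
  exact Finset.sum_le_sum fun i _ => this i

lemma bddAbove_specSet {p q : ℕ} (A : Matrix (Fin p) (Fin q) ℝ) :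
    BddAbove {c | ∃ x : Fin q → ℝ, e2 x ≤ 1 ∧ c = e2 (A.mulVec x)} := by
  refine ⟨Real.sqrt (∑ i, ∑ j, A i j ^ 2), ?_⟩
  rintro _ ⟨x, hx, rfl⟩
  exact e2_mulVec_le A x hx

lemma le_specNorm {p q : ℕ} (A : Matrix (Fin p) (Fin q) ℝ) (x : Fin q → ℝ) (hx : e2 x ≤ 1) :
    e2 (A.mulVec x) ≤ specNorm A :=
  le_csSup (bddAbove_specSet A) ⟨x, hx, rfl⟩

lemma orth_sum {a b : ℕ} (U : Matrix (Fin a) (Fin b) ℝ) (hU : Uᵀ * U = 1) (y : Fin b → ℝ) :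
    ∑ i, (U.mulVec y i) ^ 2 = ∑ j, y j ^ 2 := by
  have h1 : ∀ i, (U.mulVec y i)^2 = ∑ j, ∑ l, (U i j * y j) * (U i l * y l) := by
    intro i
    rw [sq]
    simp [Matrix.mulVec, dotProduct, Finset.sum_mul_sum]
  calc ∑ i, (U.mulVec y i)^2
      = ∑ i, ∑ j, ∑ l, (U i j * y j) * (U i l * y l) :=
        Finset.sum_congr rfl (fun i _ => h1 i)
    _ = ∑ j, ∑ l, (∑ i, U i j * U i l) * (y j * y l) := by
        rw [Finset.sum_comm]
        refine Finset.sum_congr rfl fun j _ => ?_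
        rw [Finset.sum_comm]
        refine Finset.sum_congr rfl fun l _ => ?_
        rw [Finset.sum_mul]
        exact Finset.sum_congr rfl fun i _ => by ring
    _ = ∑ j, ∑ l, ((Uᵀ * U) j l) * (y j * y l) := by
        refine Finset.sum_congr rfl fun j _ => Finset.sum_congr rfl fun l _ => ?_
        simp [Matrix.mul_apply]
    _ = ∑ j, y j ^ 2 := by
        rw [hU]
        refine Finset.sum_congr rfl fun j _ => ?_
        simp [Matrix.one_apply, Finset.sum_ite_eq, sq]

lemma proj_sum {a b : ℕ} (V : Matrix (Fin a) (Fin b) ℝ) (hV : Vᵀ * V = 1) (x : Fin a → ℝ) :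
    ∑ l, (Vᵀ.mulVec x l) ^ 2 ≤ ∑ j, x j ^ 2 := by
  set z := Vᵀ.mulVec x with hz
  set p := V.mulVec z with hp
  have hpp : ∑ j, p j ^ 2 = ∑ l, z l ^ 2 := orth_sum V hV z
  have hxp : ∑ j, x j * p j = ∑ l, z l ^ 2 := by
    calc ∑ j, x j * p j = ∑ j, ∑ l, x j * (V j l * z l) := by
          refine Finset.sum_congr rfl fun j _ => ?_
          simp [hp, Matrix.mulVec, dotProduct, Finset.mul_sum]
      _ = ∑ l, z l * ∑ j, V j l * x j := by
          rw [Finset.sum_comm]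
          refine Finset.sum_congr rfl fun l _ => ?_
          rw [Finset.mul_sum]
          exact Finset.sum_congr rfl fun j _ => by ring
      _ = ∑ l, z l ^ 2 := by
          refine Finset.sum_congr rfl fun l _ => ?_
          have : z l = ∑ j, V j l * x j := by
            simp [hz, Matrix.mulVec, dotProduct, Matrix.transpose_apply]
          rw [← this, sq]
  have key : (0:ℝ) ≤ ∑ j, (x j - p j)^2 := Finset.sum_nonneg fun j _ => sq_nonneg _
  have expand : ∑ j, (x j - p j)^2 = ∑ j, x j ^ 2 - 2 * ∑ j, (x j * p j) + ∑ j, p j ^ 2 := by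
    rw [Finset.mul_sum, ← Finset.sum_sub_distrib, ← Finset.sum_add_distrib]
    exact Finset.sum_congr rfl fun j _ => by ring
  linarith


lemma frobInner_eq_trace {p q : ℕ} (A B : Matrix (Fin p) (Fin q) ℝ) :
    frobInner A B = (Aᵀ * B).trace := by
  simp only [frobInner, Matrix.trace, Matrix.diag, Matrix.mul_apply, Matrix.transpose_apply]
  rw [Finset.sum_comm]

lemma frobInner_svd {p q k : ℕ} (U : Matrix (Fin p) (Fin k) ℝ) (V : Matrix (Fin q) (Fin k) ℝ)
    (d : Fin k → ℝ) (W : Matrix (Fin p) (Fin q) ℝ) :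
    frobInner (U * Matrix.diagonal d * Vᵀ) W = ∑ l, d l * (Uᵀ * W * V) l l := by
  rw [frobInner_eq_trace]
  have h1 : (U * Matrix.diagonal d * Vᵀ)ᵀ = V * Matrix.diagonal d * Uᵀ := by
    simp [Matrix.transpose_mul, Matrix.mul_assoc]
  rw [h1]
  have h2 : V * Matrix.diagonal d * Uᵀ * W = V * (Matrix.diagonal d * Uᵀ * W) := by
    simp [Matrix.mul_assoc]
  rw [h2, Matrix.trace_mul_comm]
  have h3 : Matrix.diagonal d * Uᵀ * W * V = Matrix.diagonal d * (Uᵀ * W * V) := by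
    simp [Matrix.mul_assoc]
  rw [h3]
  simp [Matrix.trace, Matrix.diag, Matrix.diagonal_mul]

lemma sandwich {p q k : ℕ} (U : Matrix (Fin p) (Fin k) ℝ) (V : Matrix (Fin q) (Fin k) ℝ)
    (hU : Uᵀ * U = 1) (hV : Vᵀ * V = 1) (d : Fin k → ℝ) :
    Uᵀ * (U * Matrix.diagonal d * Vᵀ) * V = Matrix.diagonal d := by
  calc Uᵀ * (U * Matrix.diagonal d * Vᵀ) * V
      = (Uᵀ * U) * Matrix.diagonal d * (Vᵀ * V) := by
        simp only [Matrix.mul_assoc]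
    _ = Matrix.diagonal d := by rw [hU, hV]; simp


theorem stmt2 (k : ℕ) (L : Matrix (Fin m) (Fin n) ℝ) (μ : ℝ) (hμ : 0 < μ)
    (U : Matrix (Fin m) (Fin k) ℝ) (V : Matrix (Fin n) (Fin k) ℝ) (σ : Fin k → ℝ)
    (hU : Uᵀ * U = 1) (hV : Vᵀ * V = 1) (hσ : ∀ i, 0 ≤ σ i)
    (hL : L = U * Matrix.diagonal σ * Vᵀ)
    (Wmu : Matrix (Fin m) (Fin n) ℝ)
    (hW : Wmu = U * Matrix.diagonal (fun i => min (σ i / μ) 1) * Vᵀ) :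
    specNorm Wmu ≤ 1 ∧
      ∀ W : Matrix (Fin m) (Fin n) ℝ, specNorm W ≤ 1 →
        frobInner L W - μ / 2 * frobSq W ≤ frobInner L Wmu - μ / 2 * frobSq Wmu := by
  set d : Fin k → ℝ := fun i => min (σ i / μ) 1 with hd
  have hd0 : ∀ l, 0 ≤ d l := fun l => le_min (div_nonneg (hσ l) hμ.le) zero_le_one
  have hd1 : ∀ l, d l ≤ 1 := fun l => min_le_right _ _
  constructor
  · apply specNorm_le _ _ zero_le_one
    intro x hx
    rw [e2_le_one_iff]
    have hx' := (e2_le_one_iff x).1 hx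
    set z := Vᵀ.mulVec x with hz
    have h1 : Wmu.mulVec x = U.mulVec (fun l => d l * z l) := by
      have e1 : (fun l => d l * z l) = (Matrix.diagonal d).mulVec z := by
        ext l; simp [Matrix.mulVec_diagonal]
      rw [hW, e1, hz, Matrix.mulVec_mulVec, Matrix.mulVec_mulVec]
    rw [h1, orth_sum U hU]
    calc ∑ l, (d l * z l)^2 ≤ ∑ l, z l ^ 2 := by
          refine Finset.sum_le_sum fun l _ => ?_
          have h2 : d l ^ 2 ≤ 1 := by nlinarith [hd0 l, hd1 l]
          nlinarith [sq_nonneg (z l)]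
      _ ≤ ∑ j, x j ^ 2 := proj_sum V hV x
      _ ≤ 1 := hx'
  · intro W hWs
    have gW : ∀ l, (Uᵀ * W * V) l l ≤ 1 := by
      intro l
      set v : Fin n → ℝ := fun j => V j l with hv
      set u : Fin m → ℝ := fun i => U i l with hu
      have hvn : ∑ j, v j ^ 2 = 1 := by
        have h1 : (Vᵀ * V) l l = 1 := by rw [hV]; simp [Matrix.one_apply]
        rw [← h1]
        simp [Matrix.mul_apply, Matrix.transpose_apply, sq, hv]
      have hun : ∑ i, u i ^ 2 = 1 := by
        have h1 : (Uᵀ * U) l l = 1 := by rw [hU]; simp [Matrix.one_apply]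
        rw [← h1]
        simp [Matrix.mul_apply, Matrix.transpose_apply, sq, hu]
      have hev : e2 v ≤ 1 := (e2_le_one_iff v).2 (le_of_eq hvn)
      have h2 : e2 (W.mulVec v) ≤ 1 := le_trans (le_specNorm W v hev) hWs
      have h3 : ∑ i, (W.mulVec v i)^2 ≤ 1 := (e2_le_one_iff _).1 h2
      have h4 : (Uᵀ * W * V) l l = ∑ i, u i * W.mulVec v i := by
        simp only [Matrix.mul_apply, Matrix.transpose_apply, Matrix.mulVec, dotProduct, hv, hu,
          Finset.sum_mul, Finset.mul_sum]
        rw [Finset.sum_comm]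
        exact Finset.sum_congr rfl fun i _ => Finset.sum_congr rfl fun j _ => by ring
      have cs := Finset.sum_mul_sq_le_sq_mul_sq Finset.univ u (fun i => W.mulVec v i)
      rw [h4]
      nlinarith [Finset.sum_nonneg (fun i (_ : i ∈ Finset.univ) => sq_nonneg (W.mulVec v i))]
    have hT : L - μ • Wmu = U * Matrix.diagonal (fun l => σ l - μ * d l) * Vᵀ := by
      rw [hL, hW]
      have hdiag : Matrix.diagonal (fun l => σ l - μ * d l)
          = Matrix.diagonal σ - μ • Matrix.diagonal d := by
        ext i j
        by_cases h : i = j <;> simp [Matrix.diagonal, Matrix.sub_apply, Matrix.smul_apply, h, hd]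
      rw [hdiag, Matrix.mul_sub, Matrix.sub_mul]
      congr 1
      simp [Matrix.smul_mul, Matrix.mul_smul]
    have hMW : frobInner (L - μ • Wmu) (W - Wmu)
        = ∑ l, (σ l - μ * d l) * ((Uᵀ * W * V) l l - d l) := by
      rw [hT, frobInner_svd]
      have h5 : Uᵀ * (W - Wmu) * V = Uᵀ * W * V - Matrix.diagonal d := by
        rw [Matrix.mul_sub, Matrix.sub_mul, hW, sandwich U V hU hV]
      refine Finset.sum_congr rfl fun l _ => ?_
      rw [h5]
      simp [Matrix.sub_apply, Matrix.diagonal_apply_eq]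
    have hnonpos : frobInner (L - μ • Wmu) (W - Wmu) ≤ 0 := by
      rw [hMW]
      apply Finset.sum_nonpos
      intro l _
      rcases le_or_gt (σ l) μ with h | h
      · have hmin : d l = σ l / μ := min_eq_left (by rw [div_le_one hμ]; exact h)
        have hz : σ l - μ * d l = 0 := by rw [hmin]; field_simp; ring
        rw [hz, zero_mul]
      · have hdl : d l = 1 := min_eq_right (by rw [le_div_iff₀ hμ]; linarith)
        apply mul_nonpos_of_nonneg_of_nonpos
        · rw [hdl]; linarith
        · rw [hdl]; linarith [gW l]
    have hsq : 0 ≤ frobSq (W - Wmu) :=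
      Finset.sum_nonneg fun i _ => Finset.sum_nonneg fun j _ => sq_nonneg _
    have expand : frobInner L W - μ/2 * frobSq W - (frobInner L Wmu - μ/2 * frobSq Wmu)
        = frobInner (L - μ • Wmu) (W - Wmu) - μ/2 * frobSq (W - Wmu) := by
      simp only [frobInner, frobSq, Matrix.sub_apply, Matrix.smul_apply, smul_eq_mul,
        Finset.mul_sum, ← Finset.sum_sub_distrib]
      exact Finset.sum_congr rfl fun i _ => Finset.sum_congr rfl fun j _ => by ring
    have : (0:ℝ) ≤ μ/2 * frobSq (W - Wmu) := mul_nonneg (by linarith) hsq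
    linarith
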